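/- Let X be a real Banach space with differentiable norm, p, q > 1 conjugate, and D_p the associated divergence. Let C ⊆ X be convex, y ∈ X, and x_m ∈ C. Then the following are equivalent: (i) D_p(x_m, y) = inf_{x ∈ C} D_p(x, y); (ii) (ỹ − x̃_m)(x − x_m) ≤ 0 for all x ∈ C; (iii) D_p(x, y) ≥ D_p(x, x_m) + D_p(x_m, y) for all x ∈ C. -/

import Mathlib

open Filter Topology Set

set_option maxHeartbeats 1000000 in
/-- Characterization of `D_p`-projections onto a convex set `C`: for `x_m ∈ C`,
minimality of `D_p(·,y)` at `x_m` is equivalent to `ỹ − x̃_m` lying in the normal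
cone to `C` at `x_m`, and to the Pythagorean inequality
`D_p(x,y) ≥ D_p(x,x_m) + D_p(x_m,y)` for all `x ∈ C`. -/
theorem projection_characterization
    (X : Type*) [NormedAddCommGroup X] [NormedSpace ℝ X]
    [CompleteSpace X] [UniformConvexSpace X]
    (p q : ℝ) (hp : 1 < p) (hpq : 1 / p + 1 / q = 1)
    (hnorm : ∀ x : X, x ≠ 0 → DifferentiableAt ℝ (fun y : X => ‖y‖) x)
    (T : X → (X →L[ℝ] ℝ)) (hT0 : T 0 = 0)
    (hTnorm : ∀ x : X, x ≠ 0 → ‖T x‖ = q * (‖x‖ / p) ^ (p - 1))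
    (hTxx : ∀ x : X, T x x = p * q * (‖x‖ / p) ^ p)
    (D : X → X → ℝ)
    (hD : ∀ x y : X, D x y = q * (‖x‖ / p) ^ p + p * (‖T y‖ / q) ^ q - T y x)
    (C : Set X) (hC : Convex ℝ C) (y : X) (xm : X) (hxm : xm ∈ C) :
    ((∀ x ∈ C, D xm y ≤ D x y) ↔ (∀ x ∈ C, (T y - T xm) (x - xm) ≤ 0)) ∧
    ((∀ x ∈ C, (T y - T xm) (x - xm) ≤ 0) ↔
      (∀ x ∈ C, D x xm + D xm y ≤ D x y)) := by
  have hcj : p.HolderConjugate q := Real.holderConjugate_iff.mpr ⟨hp, by simpa [one_div] using hpq⟩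
  have hp0 : (0:ℝ) < p := hcj.pos
  have hq0 : (0:ℝ) < q := hcj.symm.pos
  have hq1 : 1 < q := hcj.symm.lt
  have hpq1 : (p - 1) * q = p := hcj.sub_one_mul_conj
  have hsum : p * q = p + q := hcj.mul_eq_add
  -- basic algebraic fact A
  have hA : ∀ w : X, (‖T w‖ / q) ^ q = (‖w‖ / p) ^ p := by
    intro w
    by_cases hw : w = 0
    · subst hw
      simp [hT0, Real.zero_rpow hq0.ne', Real.zero_rpow hp0.ne',
        Real.zero_rpow (by linarith : p - 1 ≠ 0)]
    · rw [hTnorm w hw, mul_div_cancel_left₀ _ hq0.ne']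
      rw [← Real.rpow_mul (by positivity), hpq1]
  have hA2 : ∀ w : X, p * (‖T w‖ / q) ^ q + q * (‖w‖ / p) ^ p = T w w := by
    intro w
    rw [hA w, hTxx w]
    linear_combination (-((‖w‖ / p) ^ p)) * hsum
  -- key identity B
  have hB : ∀ x : X,
      D x y = D x xm + D xm y + (T xm (x - xm) - T y (x - xm)) := by
    intro x
    simp only [hD, map_sub]
    linear_combination (-1 : ℝ) * hA2 xm
  -- nonnegativity of D · xm
  have hC0 : ∀ x : X, 0 ≤ D x xm := by
    intro x
    rw [hD]
    by_cases hw : xm = 0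
    · subst hw
      simp only [hT0, ContinuousLinearMap.zero_apply, norm_zero, zero_div,
        Real.zero_rpow hq0.ne', mul_zero, add_zero, sub_zero]
      positivity
    · have hx0 : (0:ℝ) ≤ ‖x‖ / p := by positivity
      have hb0 : (0:ℝ) ≤ (‖xm‖ / p) ^ (p - 1) := by positivity
      have hy := Real.young_inequality_of_nonneg hx0 hb0 hcj
      have hbq : (((‖xm‖ / p) ^ (p - 1)) : ℝ) ^ q = (‖xm‖ / p) ^ p := by
        rw [← Real.rpow_mul (by positivity), hpq1]
      have hTx : T xm x ≤ ‖T xm‖ * ‖x‖ :=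
        le_trans (le_abs_self _) ((T xm).le_opNorm x)
      rw [hTnorm xm hw] at hTx
      rw [hA xm]
      have hexp : p * q * ((‖x‖ / p) ^ p / p + ((‖xm‖ / p) ^ (p - 1)) ^ q / q)
          = q * (‖x‖ / p) ^ p + p * ((‖xm‖ / p) ^ (p - 1)) ^ q := by
        field_simp
      have hmul := mul_le_mul_of_nonneg_left hy (le_of_lt (mul_pos hp0 hq0))
      have hxx : q * (‖xm‖ / p) ^ (p - 1) * ‖x‖
          = p * q * (‖x‖ / p * (‖xm‖ / p) ^ (p - 1)) := by
        field_simp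
      rw [hxx] at hTx
      rw [hexp, hbq] at hmul
      linarith
  -- derivative of the norm-term along segments
  have hDeriv : ∀ v : X,
      HasDerivAt (fun t : ℝ => q * (‖xm + t • v‖ / p) ^ p) (T xm v) 0 := by
    intro v
    by_cases hw : xm = 0
    · subst hw
      simp only [hT0, ContinuousLinearMap.zero_apply, zero_add]
      rw [hasDerivAt_iff_tendsto_slope]
      have hzero : (fun t : ℝ => q * (‖t • v‖ / p) ^ p) 0 = 0 := by
        simp [Real.zero_rpow hp0.ne']
      have hbig : Tendsto (fun t : ℝ => q * (‖v‖ / p) ^ p * |t| ^ (p - 1))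
          (𝓝[≠] (0:ℝ)) (𝓝 0) := by
        have h1 : Tendsto (fun t : ℝ => |t|) (𝓝 0) (𝓝 0) := by
          simpa using continuous_abs.tendsto (0:ℝ)
        have h2 : ContinuousAt (fun s : ℝ => s ^ (p - 1)) 0 :=
          Real.continuousAt_rpow_const 0 (p - 1) (Or.inr (by linarith))
        have h3 : Tendsto (fun t : ℝ => |t| ^ (p - 1)) (𝓝 (0:ℝ))
            (𝓝 ((0:ℝ) ^ (p - 1))) := h2.tendsto.comp h1
        rw [Real.zero_rpow (by linarith : p - 1 ≠ 0)] at h3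
        have := h3.const_mul (q * (‖v‖ / p) ^ p)
        rw [mul_zero] at this
        exact this.mono_left nhdsWithin_le_nhds
      refine squeeze_zero_norm' ?_ hbig
      filter_upwards [self_mem_nhdsWithin] with t ht
      have ht0 : t ≠ 0 := ht
      have habs : (0:ℝ) < |t| := abs_pos.mpr ht0
      have hnv : ‖t • v‖ / p = |t| * (‖v‖ / p) := by
        rw [norm_smul, Real.norm_eq_abs]; ring
      have hsplit : (|t| * (‖v‖ / p)) ^ p = |t| ^ p * (‖v‖ / p) ^ p :=
        Real.mul_rpow (abs_nonneg t) (by positivity)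
      have hpow : |t| ^ p = |t| ^ (p - 1) * |t| := by
        have h := Real.rpow_add habs (p - 1) 1
        rw [Real.rpow_one] at h
        rw [show p - 1 + 1 = p by ring] at h
        exact h
      have hz2 : q * (‖(0:ℝ) • v‖ / p) ^ p = 0 := by
        simp [Real.zero_rpow hp0.ne']
      rw [slope_def_field, hz2]
      rw [hnv, hsplit, hpow]
      rw [sub_zero, sub_zero]
      rw [Real.norm_eq_abs, abs_div,
        abs_of_nonneg (by positivity : (0:ℝ) ≤ q * (|t| ^ (p - 1) * |t| * (‖v‖ / p) ^ p))]
      rw [div_le_iff₀ habs]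
      apply le_of_eq
      ring
    · -- xm ≠ 0 : use differentiability of the norm
      set f := fderiv ℝ (fun z : X => ‖z‖) xm with hf_def
      have hf : HasFDerivAt (fun z : X => ‖z‖) f xm := (hnorm xm hw).hasFDerivAt
      have hline : ∀ u : X, HasDerivAt (fun t : ℝ => ‖xm + t • u‖) (f u) 0 := by
        intro u
        have h1 : HasDerivAt (fun t : ℝ => xm + t • u) u 0 := by
          simpa using ((hasDerivAt_id (0:ℝ)).smul_const u).const_add xm
        have h2 := hf.comp_hasDerivAt_of_eq 0 h1 (by simp)
        exact h2
      have hnorming : T xm xm = ‖T xm‖ * ‖xm‖ := by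
        have hxmp : (0:ℝ) < ‖xm‖ / p := by
          have := norm_pos_iff.mpr hw; positivity
        have hstep : (‖xm‖ / p) ^ p = (‖xm‖ / p) ^ (p - 1) * (‖xm‖ / p) := by
          have h := Real.rpow_add hxmp (p - 1) 1
          rw [Real.rpow_one] at h
          rw [show p - 1 + 1 = p by ring] at h
          exact h
        rw [hTxx xm, hTnorm xm hw, hstep]
        field_simp
      have hTf : ∀ u : X, T xm u = ‖T xm‖ * f u := by
        have key : ∀ u : X, T xm u ≤ ‖T xm‖ * f u := by
          intro u
          have hslope : Tendsto
              (fun t : ℝ => ‖T xm‖ * ((‖xm + t • u‖ - ‖xm‖) / t))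
              (𝓝[>] (0:ℝ)) (𝓝 (‖T xm‖ * f u)) := by
            have h2 := (hasDerivAt_iff_tendsto_slope.mp (hline u)).mono_left
              (nhdsWithin_mono _ (fun t ht => ne_of_gt ht))
            have h3 := h2.const_mul ‖T xm‖
            refine h3.congr ?_
            intro t
            rw [slope_def_field]
            simp
          refine ge_of_tendsto hslope ?_
          filter_upwards [self_mem_nhdsWithin] with t ht
          have ht0 : (0:ℝ) < t := ht
          have h4 : T xm (xm + t • u) = T xm xm + t * T xm u := by
            simp [map_add, map_smul, smul_eq_mul]
          have h5 : T xm (xm + t • u) ≤ ‖T xm‖ * ‖xm + t • u‖ :=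
            le_trans (le_abs_self _) ((T xm).le_opNorm _)
          rw [h4, hnorming] at h5
          rw [← mul_div_assoc, le_div_iff₀ ht0]
          linarith
        intro u
        have h1 := key u
        have h2 := key (-u)
        simp only [map_neg, mul_neg] at h2
        linarith
      have hxmp : (0:ℝ) < ‖xm‖ / p := by
        have := norm_pos_iff.mpr hw; positivity
      have hr : HasDerivAt (fun s : ℝ => s ^ p)
          (p * (‖xm‖ / p) ^ (p - 1)) (‖xm‖ / p) :=
        Real.hasDerivAt_rpow_const (Or.inl hxmp.ne')
      have hn : HasDerivAt (fun t : ℝ => ‖xm + t • v‖ / p) (f v / p) 0 :=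
        (hline v).div_const p
      have hcomp : HasDerivAt (fun t : ℝ => (‖xm + t • v‖ / p) ^ p)
          (p * (‖xm‖ / p) ^ (p - 1) * (f v / p)) 0 := by
        have h6 : HasDerivAt (fun s : ℝ => s ^ p)
            (p * (‖xm‖ / p) ^ (p - 1)) ((fun t : ℝ => ‖xm + t • v‖ / p) 0) := by
          simpa using hr
        exact h6.comp 0 hn
      have h7 := hcomp.const_mul q
      have heqd : T xm v = q * (p * (‖xm‖ / p) ^ (p - 1) * (f v / p)) := by
        rw [hTf v, hTnorm xm hw]
        field_simp
      rw [heqd]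
      exact h7
  -- (i) → (ii)
  have hi_ii : (∀ x ∈ C, D xm y ≤ D x y) →
      (∀ x ∈ C, (T y - T xm) (x - xm) ≤ 0) := by
    intro hmin x hx
    set v := x - xm with hv
    have hphi : HasDerivAt (fun t : ℝ => D (xm + t • v) xm) 0 0 := by
      have h1 := hDeriv v
      have h2 : HasDerivAt (fun t : ℝ => T xm (xm + t • v)) (T xm v) 0 := by
        have heq2 : (fun t : ℝ => T xm (xm + t • v))
            = fun t : ℝ => T xm xm + T xm v * t := by
          funext t; simp [map_add, map_smul, smul_eq_mul, mul_comm]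
        rw [heq2]
        simpa using ((hasDerivAt_id (0:ℝ)).const_mul (T xm v)).const_add (T xm xm)
      have h3 := (h1.sub h2).add_const (p * (‖T xm‖ / q) ^ q)
      have heq : (fun t : ℝ => D (xm + t • v) xm)
          = fun t : ℝ => (q * (‖xm + t • v‖ / p) ^ p - T xm (xm + t • v))
              + p * (‖T xm‖ / q) ^ q := by
        funext t; rw [hD]; ring
      rw [heq]
      simpa using h3
    have hphi0 : D (xm + (0:ℝ) • v) xm = 0 := by
      rw [hD]
      simp only [zero_smul, add_zero]
      linarith [hA2 xm]
    have hslope : Tendsto (fun t : ℝ => D (xm + t • v) xm / t)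
        (𝓝[>] (0:ℝ)) (𝓝 0) := by
      have h1 := (hasDerivAt_iff_tendsto_slope.mp hphi).mono_left
        (nhdsWithin_mono _ (fun t ht => ne_of_gt ht))
      refine h1.congr ?_
      intro t
      rw [slope_def_field, hphi0]
      simp
    have hbound : ∀ t ∈ Set.Ioc (0:ℝ) 1,
        (T y - T xm) v ≤ D (xm + t • v) xm / t := by
      rintro t ⟨ht0, ht1⟩
      have hmem : xm + t • v ∈ C := by
        have h1 := hC hxm hx (by linarith : (0:ℝ) ≤ 1 - t) ht0.le (by ring)
        have h2 : xm + t • v = (1 - t) • xm + t • x := by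
          rw [hv]; rw [smul_sub, sub_smul, one_smul]; abel
        rw [h2]; exact h1
      have hle := hmin _ hmem
      rw [hB (xm + t • v)] at hle
      have harg : xm + t • v - xm = t • v := by abel
      rw [harg] at hle
      simp only [map_smul, smul_eq_mul] at hle
      rw [ContinuousLinearMap.sub_apply, le_div_iff₀ ht0]
      linarith
    have hfin : (T y - T xm) v ≤ 0 := by
      refine ge_of_tendsto hslope ?_
      filter_upwards [Ioc_mem_nhdsGT_of_mem (⟨le_refl (0:ℝ), zero_lt_one⟩ :
        (0:ℝ) ∈ Set.Ico (0:ℝ) 1)] with t ht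
      exact hbound t ht
    simpa [hv] using hfin
  -- (ii) → (i)
  have hii_i : (∀ x ∈ C, (T y - T xm) (x - xm) ≤ 0) →
      (∀ x ∈ C, D xm y ≤ D x y) := by
    intro h x hx
    have h1 := h x hx
    rw [ContinuousLinearMap.sub_apply] at h1
    have h2 := hC0 x
    rw [hB x]
    linarith
  -- (ii) ↔ (iii)
  have hii_iii : (∀ x ∈ C, (T y - T xm) (x - xm) ≤ 0) ↔
      (∀ x ∈ C, D x xm + D xm y ≤ D x y) := by
    constructor
    · intro h x hx
      have h1 := h x hx
      rw [ContinuousLinearMap.sub_apply] at h1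
      rw [hB x]
      linarith
    · intro h x hx
      have h1 := h x hx
      rw [hB x] at h1
      rw [ContinuousLinearMap.sub_apply]
      linarith
  exact ⟨⟨hi_ii, hii_i⟩, hii_iii⟩
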